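/- Let g : (0,∞) → (0,∞) be differentiable with g'(p) > 0 for all p > 0, and let k : (0,∞) → (0,∞). Let t ≥ 1, let x₁, …, x_t > 0, and let I₁, …, I_t ∈ {0,1}. Define L(p) = Σ_{j=1}^t [ I_j·log( g(p)/(g(p)+k(x_j)) ) + (1−I_j)·log( k(x_j)/(g(p)+k(x_j)) ) ] for p > 0. Then L is strictly quasi-concave on (0,∞): for all 0 < p₁ < p₂ and every p ∈ (p₁, p₂), L(p) > min( L(p₁), L(p₂) ). -/

import Mathlib

open Finset

/-- Lemma B.1: for response functions h(x,p) = g(p)/(g(p)+k(x)), the log-likelihood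
of observed binary responses is strictly quasi-concave in the ability p, so the
maximum likelihood estimator is unique. -/
theorem loglikelihood_strictly_quasiconcave
    (g k : ℝ → ℝ)
    (hg_pos : ∀ p > (0:ℝ), 0 < g p) (hk_pos : ∀ x > (0:ℝ), 0 < k x)
    (hg_diff : ∀ p > (0:ℝ), DifferentiableAt ℝ g p)
    (hg' : ∀ p > (0:ℝ), 0 < deriv g p)
    (t : ℕ) (ht : 1 ≤ t)
    (x : Fin t → ℝ) (hx : ∀ j, 0 < x j)
    (I : Fin t → ℝ) (hI : ∀ j, I j = 0 ∨ I j = 1)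
    (L : ℝ → ℝ)
    (hL : ∀ p, L p = ∑ j : Fin t,
        (I j * Real.log (g p / (g p + k (x j))) +
          (1 - I j) * Real.log (k (x j) / (g p + k (x j))))) :
    ∀ p₁ p₂ p : ℝ, 0 < p₁ → p₁ < p → p < p₂ → min (L p₁) (L p₂) < L p := by
  intro p₁ p₂ p hp₁ h₁p hpp₂
  have hp : 0 < p := hp₁.trans h₁p
  have hp₂ : 0 < p₂ := hp.trans hpp₂
  have hk' : ∀ j : Fin t, 0 < k (x j) := fun j => hk_pos _ (hx j)
  have hden : ∀ q > (0:ℝ), ∀ j : Fin t, 0 < g q + k (x j) := fun q hq j =>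
    add_pos (hg_pos q hq) (hk' j)
  set S : ℝ := ∑ j : Fin t, I j with hS
  set C : ℝ := ∑ j : Fin t, (1 - I j) * Real.log (k (x j)) with hC
  set M : ℝ → ℝ := fun r =>
    S * Real.log (g r) - (∑ j : Fin t, Real.log (g r + k (x j))) + C with hM
  -- L agrees with M on (0, ∞)
  have hLM : ∀ q ∈ Set.Ioi (0:ℝ), L q = M q := by
    intro q hq
    have hq : (0:ℝ) < q := hq
    have h1 : ∀ j : Fin t,
        I j * Real.log (g q / (g q + k (x j))) +
          (1 - I j) * Real.log (k (x j) / (g q + k (x j)))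
        = I j * Real.log (g q) + (1 - I j) * Real.log (k (x j))
            - Real.log (g q + k (x j)) := by
      intro j
      rw [Real.log_div (hg_pos q hq).ne' (hden q hq j).ne',
        Real.log_div (hk' j).ne' (hden q hq j).ne']
      ring
    rw [hL q, Finset.sum_congr rfl fun j _ => h1 j, hM]
    simp only [hS, hC, Finset.sum_mul, Finset.sum_sub_distrib, Finset.sum_add_distrib]
    ring
  -- g is strictly monotone on (0, ∞)
  have hgc : ContinuousOn g (Set.Ioi 0) := fun q hq =>
    (hg_diff q hq).continuousAt.continuousWithinAt
  have hgmono : StrictMonoOn g (Set.Ioi 0) :=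
    strictMonoOn_of_deriv_pos (convex_Ioi 0) hgc
      (by simpa [interior_Ioi] using fun q hq => hg' q hq)
  set Φ : ℝ → ℝ := fun q => S - ∑ j : Fin t, g q / (g q + k (x j)) with hΦ
  have hne : (Finset.univ : Finset (Fin t)).Nonempty := ⟨⟨0, ht⟩, Finset.mem_univ _⟩
  -- Φ is strictly antitone on (0, ∞)
  have hΦanti : StrictAntiOn Φ (Set.Ioi 0) := by
    intro a ha b hb hab
    have hga : 0 < g a := hg_pos a ha
    have hgab : g a < g b := hgmono ha hb hab
    have : ∑ j : Fin t, g a / (g a + k (x j)) < ∑ j : Fin t, g b / (g b + k (x j)) := by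
      refine Finset.sum_lt_sum_of_nonempty hne ?_
      intro j _
      rw [div_lt_div_iff₀ (hden a ha j) (hden b hb j)]
      nlinarith [hk' j]
    simp only [hΦ]
    linarith
  -- derivative formula for L on (0, ∞)
  have hderiv : ∀ q > (0:ℝ), deriv L q = deriv g q / g q * Φ q := by
    intro q hq
    have hgq : HasDerivAt g (deriv g q) q := (hg_diff q hq).hasDerivAt
    have h1 : HasDerivAt (fun r => Real.log (g r)) (deriv g q / g q) q :=
      hgq.log (hg_pos q hq).ne'
    have hj : ∀ j : Fin t, HasDerivAt (fun r => Real.log (g r + k (x j)))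
        (deriv g q / (g q + k (x j))) q := fun j =>
      (hgq.add_const _).log (hden q hq j).ne'
    have hsum : HasDerivAt (fun r => ∑ j : Fin t, Real.log (g r + k (x j)))
        (∑ j : Fin t, deriv g q / (g q + k (x j))) q :=
      HasDerivAt.fun_sum fun j _ => hj j
    have hM' : HasDerivAt M
        (S * (deriv g q / g q) - ∑ j : Fin t, deriv g q / (g q + k (x j))) q :=
      ((h1.const_mul S).sub hsum).add_const C
    have hEq : L =ᶠ[nhds q] M :=
      Filter.eventually_of_mem (isOpen_Ioi.mem_nhds hq) hLM
    rw [hEq.deriv_eq, hM'.deriv]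
    have hterm : ∀ j : Fin t, deriv g q / (g q + k (x j))
        = deriv g q / g q * (g q / (g q + k (x j))) := by
      intro j
      rw [div_mul_div_comm, mul_comm (deriv g q) (g q),
        mul_div_mul_left _ _ (hg_pos q hq).ne']
    rw [Finset.sum_congr rfl fun j _ => hterm j, ← Finset.mul_sum]
    simp only [hΦ]
    ring
  -- continuity of L on (0, ∞)
  have hMcont : ContinuousOn M (Set.Ioi 0) := by
    refine ContinuousOn.add (ContinuousOn.sub ?_ ?_) continuousOn_const
    · exact continuousOn_const.mul (hgc.log fun q hq => (hg_pos q hq).ne')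
    · exact continuousOn_finset_sum _ fun j _ =>
        (hgc.add continuousOn_const).log fun q hq => (hden q hq j).ne'
  have hLcont : ContinuousOn L (Set.Ioi 0) := hMcont.congr hLM
  rcases lt_or_ge 0 (Φ p) with hpos | hneg
  · -- L strictly increasing on [p₁, p]
    have hmono : StrictMonoOn L (Set.Icc p₁ p) := by
      refine strictMonoOn_of_deriv_pos (convex_Icc _ _)
        (hLcont.mono fun q hq => lt_of_lt_of_le hp₁ hq.1) ?_
      intro q hq
      rw [interior_Icc] at hq
      have hq0 : 0 < q := hp₁.trans hq.1
      rw [hderiv q hq0]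
      have hΦq : Φ p < Φ q := hΦanti hq0 hp hq.2
      exact mul_pos (div_pos (hg' q hq0) (hg_pos q hq0)) (hpos.trans hΦq)
    calc min (L p₁) (L p₂) ≤ L p₁ := min_le_left _ _
      _ < L p := hmono ⟨le_refl _, h₁p.le⟩ ⟨h₁p.le, le_refl _⟩ h₁p
  · -- L strictly decreasing on [p, p₂]
    have hanti : StrictAntiOn L (Set.Icc p p₂) := by
      refine strictAntiOn_of_deriv_neg (convex_Icc _ _)
        (hLcont.mono fun q hq => lt_of_lt_of_le hp hq.1) ?_
      intro q hq
      rw [interior_Icc] at hq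
      have hq0 : 0 < q := hp.trans hq.1
      rw [hderiv q hq0]
      have hΦq : Φ q < Φ p := hΦanti hp hq0 hq.1
      exact mul_neg_of_pos_of_neg (div_pos (hg' q hq0) (hg_pos q hq0))
        (hΦq.trans_le hneg)
    calc min (L p₁) (L p₂) ≤ L p₂ := min_le_right _ _
      _ < L p := hanti ⟨le_refl _, hpp₂.le⟩ ⟨hpp₂.le, le_refl _⟩ hpp₂
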